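/- In a simple graph G, every closed non-backtracking walk of positive length has length at least the girth of G. Here a walk w_0, w_1, …, w_L (with w_0 = w_L, L ≥ 1) is non-backtracking if w_{i+1} ≠ w_{i−1} for all 1 ≤ i ≤ L−1 and also w_1 ≠ w_{L−1}. -/

import Mathlib

open SimpleGraph

private lemma range_map_shift {β : Type*} (f : ℕ → β) (n a : ℕ) :
    (List.range (n + 1)).map (fun k => f (a + k)) =
      f a :: (List.range n).map (fun k => f (a + 1 + k)) := by
  rw [List.range_succ_eq_map, List.map_cons, List.map_map]
  simp only [Function.comp_def, Nat.add_zero]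
  congr 1
  apply List.map_congr_left
  intro k _; congr 1; omega

private lemma walk_of_fn {α : Type*} (G : SimpleGraph α) (w : ℕ → α) :
    ∀ (n s : ℕ), (∀ i, s ≤ i → i < s + n → G.Adj (w i) (w (i + 1))) →
    ∃ p : G.Walk (w s) (w (s + n)), p.length = n ∧
      p.support = (List.range (n + 1)).map (fun k => w (s + k)) ∧
      p.edges = (List.range n).map (fun k => s(w (s + k), w (s + k + 1))) := by
  intro n
  induction n with
  | zero =>
    intro s _
    exact ⟨(SimpleGraph.Walk.nil).copy rfl (by rw [Nat.add_zero]),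
      by simp, by rw [range_map_shift w 0 s]; simp, by simp⟩
  | succ n ih =>
    intro s h
    obtain ⟨p, hlen, hsup, hedg⟩ := ih (s + 1) (fun i h1 h2 => h i (by omega) (by omega))
    refine ⟨(SimpleGraph.Walk.cons (h s le_rfl (by omega)) p).copy rfl (by ring_nf), ?_, ?_, ?_⟩
    · simp [hlen]
    · rw [Walk.support_copy, Walk.support_cons, hsup, range_map_shift w (n + 1) s]
    · rw [Walk.edges_copy, Walk.edges_cons, hedg,
        range_map_shift (fun t => s(w t, w (t + 1))) n s]

private lemma girth_le_of_cycle_fn {α : Type*} (G : SimpleGraph α) (w : ℕ → α) (s m : ℕ)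
    (hm : 3 ≤ m)
    (hadj : ∀ i, s ≤ i → i < s + m → G.Adj (w i) (w (i + 1)))
    (hclosed : w (s + m) = w s)
    (hdist : ∀ i j, s ≤ i → i < j → j < s + m → w i ≠ w j) :
    (G.girth : ℕ∞) ≤ (m : ℕ∞) := by
  obtain ⟨p, hlen, hsup, hedg⟩ := walk_of_fn G w (m - 1) (s + 1)
    (fun i h1 h2 => hadj i (by omega) (by omega))
  have hend : s + 1 + (m - 1) = s + m := by omega
  set p' : G.Walk (w (s + 1)) (w s) := p.copy rfl (by rw [hend, hclosed]) with hp'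
  have hc : G.Adj (w s) (w (s + 1)) := hadj s le_rfl (by omega)
  set c : G.Walk (w s) (w s) := SimpleGraph.Walk.cons hc p' with hcdef
  have hpath : p'.IsPath := by
    rw [Walk.isPath_def, hp', Walk.support_copy, hsup]
    apply List.Nodup.map_on
    · intro x hx y hy hxy
      simp only [List.mem_range] at hx hy
      rcases Nat.lt_trichotomy x y with h | h | h
      · exact absurd hxy (by
          intro hq
          rcases Nat.lt_or_ge (s + 1 + y) (s + m) with h2 | h2
          · exact hdist _ _ (by omega) (by omega) h2 hq
          · have hyx : s + 1 + y = s + m := by omega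
            rw [hyx, hclosed] at hq
            exact hdist s (s + 1 + x) le_rfl (by omega) (by omega) hq.symm)
      · exact h
      · exact absurd hxy.symm (by
          intro hq
          rcases Nat.lt_or_ge (s + 1 + x) (s + m) with h2 | h2
          · exact hdist _ _ (by omega) (by omega) h2 hq
          · have hyx : s + 1 + x = s + m := by omega
            rw [hyx, hclosed] at hq
            exact hdist s (s + 1 + y) le_rfl (by omega) (by omega) hq.symm)
    · exact List.nodup_range
  have hedge : s(w s, w (s + 1)) ∉ p'.edges := by
    rw [hp', Walk.edges_copy, hedg]
    intro hmem
    simp only [List.mem_map, List.mem_range] at hmem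
    obtain ⟨k, hk, heq⟩ := hmem
    rw [Sym2.eq_iff] at heq
    rcases heq with ⟨h1, h2⟩ | ⟨h1, h2⟩
    · exact hdist s (s + 1 + k) le_rfl (by omega) (by omega) h1.symm
    · rcases Nat.lt_or_ge (s + 1 + k + 1) (s + m) with h3 | h3
      · exact hdist s (s + 1 + k + 1) le_rfl (by omega) h3 h2.symm
      · have hk2 : s + 1 + k = s + m - 1 := by omega
        rw [hk2] at h1
        exact hdist (s + 1) (s + m - 1) (by omega) (by omega) (by omega) h1.symm
  have hcyc : c.IsCycle := (Walk.cons_isCycle_iff p' hc).mpr ⟨hpath, hedge⟩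
  have hclen : c.length = m := by
    rw [hcdef, Walk.length_cons, hp', Walk.length_copy, hlen]; omega
  have hegirth : G.egirth ≤ (m : ℕ∞) := by
    have := le_egirth.mp (le_refl G.egirth) (w s) c hcyc
    rwa [hclen] at this
  calc (G.girth : ℕ∞) ≤ G.egirth := by
        rw [SimpleGraph.girth]
        exact ENat.coe_toNat_le_self _
    _ ≤ (m : ℕ∞) := hegirth

/-- In a simple graph `G`, every closed non-backtracking walk of positive
length has length at least the girth of `G`.  A closed walk `w 0, w 1, …, w L` (with
`w L = w 0`, `L ≥ 1`, consecutive vertices adjacent) is non-backtracking if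
`w (i+1) ≠ w (i-1)` for all `1 ≤ i ≤ L - 1` and also `w 1 ≠ w (L-1)`. -/
theorem girth_le_length_of_closed_nonbacktracking_walk
    {α : Type*} (G : SimpleGraph α)
    (L : ℕ) (hL : 1 ≤ L) (w : ℕ → α)
    (hclosed : w L = w 0)
    (hadj : ∀ i : ℕ, i < L → G.Adj (w i) (w (i + 1)))
    (hnb : ∀ i : ℕ, 1 ≤ i → i ≤ L - 1 → w (i + 1) ≠ w (i - 1))
    (hnb' : w 1 ≠ w (L - 1)) :
    G.girth ≤ (L : ℕ∞) := by
  rcases Nat.lt_or_ge L 3 with hL3 | hL3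
  · interval_cases L
    · have h1 : w (0 + 1) = w 0 := hclosed
      exact absurd (h1 ▸ hadj 0 (by omega)) (G.irrefl)
    · exact absurd hclosed (hnb 1 le_rfl (by omega))
  · by_cases hall : ∀ i j : ℕ, i < j → j < L → w i ≠ w j
    · exact girth_le_of_cycle_fn G w 0 L hL3 (fun i _ h2 => hadj i (by omega))
        (by simpa using hclosed) (fun i j _ hij hj => hall i j hij (by omega))
    · push_neg at hall
      obtain ⟨i0, j0, hij, hjL, heq⟩ := hall
      classical
      have hex : ∃ d, 1 ≤ d ∧ ∃ i, i + d < L ∧ w i = w (i + d) :=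
        ⟨j0 - i0, by omega, i0, by omega, by rw [show i0 + (j0 - i0) = j0 by omega]; exact heq⟩
      set d := Nat.find hex with hddef
      obtain ⟨hd1, i, hiL, hieq⟩ := Nat.find_spec hex
      rw [← hddef] at hd1 hiL hieq
      have hmin : ∀ d', d' < d → ¬ (1 ≤ d' ∧ ∃ i, i + d' < L ∧ w i = w (i + d')) :=
        fun d' hd' => Nat.find_min hex hd'
      have hd_ne1 : d ≠ 1 := by
        intro h
        rw [h] at hieq
        exact absurd ((hadj i (by omega)).ne) (by simp [hieq])
      have hd_ne2 : d ≠ 2 := by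
        intro h
        rw [h] at hieq hiL
        exact hnb (i + 1) (by omega) (by omega) (by
          rw [show i + 1 + 1 = i + 2 from rfl, show i + 1 - 1 = i from rfl]
          exact hieq.symm)
      have hd3 : 3 ≤ d := by omega
      have hgd : (G.girth : ℕ∞) ≤ (d : ℕ∞) := by
        apply girth_le_of_cycle_fn G w i d hd3
        · intro k h1 h2; exact hadj k (by omega)
        · exact hieq.symm
        · intro a b ha hab hb habs
          exact hmin (b - a) (by omega) ⟨by omega, a, by omega,
            by rw [show a + (b - a) = b by omega]; exact habs⟩
      exact hgd.trans (by exact_mod_cast Nat.le_of_lt (by omega : d < L))
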